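/- arXiv:1312.4023 — 3 statements merged into one kernel-verified Lean document; each statement's English description precedes it below -/
import Mathlib

section
/- If M is a principally δ-lifting right R-module, then the factor module M/Rad_δ(M) is principally semisimple, i.e., every cyclic submodule of M/Rad_δ(M) is a direct summand of M/Rad_δ(M). -/
/-- A submodule `K` of `M` is *essential* in `M` if it has nonzero intersection with
every nonzero submodule of `M`. -/
def IsEssentialSubmodule {R M : Type*} [Ring R] [AddCommGroup M] [Module R M]
    (K : Submodule R M) : Prop :=
  ∀ N : Submodule R M, N ≠ ⊥ → K ⊓ N ≠ ⊥

/-- A module `M` is *singular* if the annihilator of every element of `M` is an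
essential ideal of `R`. -/
def IsSingularModule (R M : Type*) [Ring R] [AddCommGroup M] [Module R M] : Prop :=
  ∀ x : M, IsEssentialSubmodule (LinearMap.ker (LinearMap.toSpanSingleton R M x))

/-- A submodule `N` of `M` is *δ-small* in `M` if whenever `M = N + X` with `M/X`
singular, we have `X = M`. -/
def IsDeltaSmall (R : Type*) {M : Type*} [Ring R] [AddCommGroup M] [Module R M]
    (N : Submodule R M) : Prop :=
  ∀ X : Submodule R M, N ⊔ X = ⊤ → IsSingularModule R (M ⧸ X) → X = ⊤

/-- A module `M` is *principally δ-lifting* if for each `m ∈ M` there is a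
decomposition `M = A ⊕ B` with `A ≤ mR` and `mR ∩ B` δ-small in `B`. -/
def IsPrinDeltaLifting (R M : Type*) [Ring R] [AddCommGroup M] [Module R M] : Prop :=
  ∀ m : M, ∃ A B : Submodule R M, A ≤ Submodule.span R {m} ∧ IsCompl A B ∧
    IsDeltaSmall R ((Submodule.span R {m} ⊓ B).comap B.subtype)

lemma singular_of_injective {R P Q : Type*} [Ring R] [AddCommGroup P] [Module R P]
    [AddCommGroup Q] [Module R Q] (f : P →ₗ[R] Q) (hf : Function.Injective f)
    (hQ : IsSingularModule R Q) : IsSingularModule R P := by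
  intro x
  have h : LinearMap.ker (LinearMap.toSpanSingleton R P x)
      = LinearMap.ker (LinearMap.toSpanSingleton R Q (f x)) := by
    ext r
    simp only [LinearMap.mem_ker, LinearMap.toSpanSingleton_apply, ← map_smul f]
    constructor
    · intro h; rw [h, map_zero]
    · intro h; exact hf (by rw [h, map_zero])
  rw [h]; exact hQ (f x)

lemma singular_quot_comap {R M M' : Type*} [Ring R] [AddCommGroup M] [Module R M]
    [AddCommGroup M'] [Module R M'] (f : M →ₗ[R] M') (X : Submodule R M')
    (h : IsSingularModule R (M' ⧸ X)) : IsSingularModule R (M ⧸ X.comap f) := by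
  refine singular_of_injective (Submodule.mapQ (X.comap f) X f le_rfl) ?_ h
  rw [← LinearMap.ker_eq_bot, eq_bot_iff]
  intro y hy
  obtain ⟨x, rfl⟩ := Submodule.Quotient.mk_surjective _ y
  rw [LinearMap.mem_ker, Submodule.mapQ_apply, Submodule.Quotient.mk_eq_zero] at hy
  simpa [Submodule.Quotient.mk_eq_zero] using hy

lemma deltaSmall_map {R M M' : Type*} [Ring R] [AddCommGroup M] [Module R M]
    [AddCommGroup M'] [Module R M'] (f : M →ₗ[R] M') (hf : Function.Surjective f)
    {N : Submodule R M} (hN : IsDeltaSmall R N) : IsDeltaSmall R (N.map f) := by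
  intro X hsup hsing
  have h1 : N ⊔ X.comap f = ⊤ := by
    rw [eq_top_iff]
    intro m _
    have hm : f m ∈ N.map f ⊔ X := hsup ▸ Submodule.mem_top
    obtain ⟨y, hy, x, hx, hyx⟩ := Submodule.mem_sup.mp hm
    obtain ⟨n, hn, rfl⟩ := hy
    refine Submodule.mem_sup.mpr ⟨n, hn, m - n, ?_, by abel⟩
    have : f (m - n) = x := by rw [map_sub, ← hyx, add_sub_cancel_left]
    simpa [Submodule.mem_comap, this] using hx
  have h2 := hN _ h1 (singular_quot_comap f X hsing)
  have := Submodule.map_comap_eq_of_surjective hf X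
  rw [h2, Submodule.map_top, LinearMap.range_eq_top.mpr hf] at this
  exact this.symm

lemma deltaSmall_of_submodule {R M : Type*} [Ring R] [AddCommGroup M] [Module R M]
    (B : Submodule R M) {N : Submodule R B} (hN : IsDeltaSmall R N) :
    IsDeltaSmall R (N.map B.subtype) := by
  intro X hsup hsing
  have h1 : N ⊔ X.comap B.subtype = ⊤ := by
    rw [eq_top_iff]
    rintro ⟨b, hb⟩ _
    have hm : b ∈ N.map B.subtype ⊔ X := hsup ▸ Submodule.mem_top
    obtain ⟨y, hy, x, hx, hyx⟩ := Submodule.mem_sup.mp hm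
    obtain ⟨n, hn, rfl⟩ := hy
    refine Submodule.mem_sup.mpr ⟨n, hn, ⟨b, hb⟩ - n, ?_, by abel⟩
    have hx' : ((⟨b, hb⟩ : B) - n : B) = (b - (n : M) : M) := rfl
    have : b - (n : M) = x := by rw [← hyx]; exact add_sub_cancel_left _ _
    simp only [Submodule.mem_comap, Submodule.coe_subtype, hx', this]
    exact hx
  have h2 := hN _ h1 (singular_quot_comap B.subtype X hsing)
  have hBX : B ≤ X := by
    intro b hb
    have : (⟨b, hb⟩ : B) ∈ X.comap B.subtype := h2 ▸ Submodule.mem_top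
    simpa using this
  rw [eq_top_iff, ← hsup]
  exact sup_le (le_trans (Submodule.map_subtype_le B N) hBX) le_rfl

/-- `Rad_δ(M)`: the sum of all δ-small submodules of `M`. -/
def deltaRad (R M : Type*) [Ring R] [AddCommGroup M] [Module R M] : Submodule R M :=
  sSup {N : Submodule R M | IsDeltaSmall R N}

/-- A module is *principally semisimple* if every cyclic submodule is a direct summand. -/
def IsPrinSemisimple (R M : Type*) [Ring R] [AddCommGroup M] [Module R M] : Prop :=
  ∀ m : M, ∃ B : Submodule R M, IsCompl (Submodule.span R {m}) B

theorem quotient_deltaRad_isPrinSemisimple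
    {R M : Type*} [Ring R] [AddCommGroup M] [Module R M]
    (hM : IsPrinDeltaLifting R M) :
    IsPrinSemisimple R (M ⧸ deltaRad R M) := by
  intro x
  obtain ⟨m, rfl⟩ := Submodule.Quotient.mk_surjective (deltaRad R M) x
  set D := deltaRad R M with hDdef
  obtain ⟨A, B, hA, hcompl, hsmall⟩ := hM m
  -- span{m} ⊓ B ≤ D
  have hND : Submodule.span R {m} ⊓ B ≤ D := by
    have h1 := deltaSmall_of_submodule B hsmall
    rw [Submodule.map_comap_subtype] at h1
    have heq : B ⊓ (Submodule.span R {m} ⊓ B) = Submodule.span R {m} ⊓ B := by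
      rw [inf_comm, inf_assoc, inf_idem]
    rw [heq] at h1
    exact le_sSup h1
  -- projection onto A maps D into D
  set pr := Submodule.projectionOnto A B hcompl with hpr
  have hprsurj : Function.Surjective pr := by
    intro a
    exact ⟨(a : M), Submodule.linearProjOfIsCompl_apply_left hcompl a⟩
  set g : M →ₗ[R] M := A.subtype.comp pr with hg
  have hmapD : Submodule.map g D ≤ D := by
    rw [Submodule.map_le_iff_le_comap, hDdef, deltaRad, sSup_le_iff]
    intro N hN
    rw [← Submodule.map_le_iff_le_comap]
    have h1 : IsDeltaSmall R (N.map pr) := deltaSmall_map pr hprsurj hN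
    have h2 : IsDeltaSmall R ((N.map pr).map A.subtype) := deltaSmall_of_submodule A h1
    rw [← Submodule.map_comp] at h2
    exact le_sSup h2
  -- disjointness in quotient
  have hdisj : Disjoint (Submodule.map D.mkQ A) (Submodule.map D.mkQ B) := by
    rw [disjoint_iff, eq_bot_iff]
    intro y hy
    rw [Submodule.mem_inf] at hy
    obtain ⟨hyA, hyB⟩ := hy
    obtain ⟨a, ha, rfl⟩ := hyA
    obtain ⟨b, hb, hab⟩ := hyB
    have hd : a - b ∈ D := by
      have : D.mkQ (a - b) = 0 := by
        rw [map_sub, hab, sub_self]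
      rwa [← Submodule.Quotient.mk_eq_zero]
    have hga : g (a - b) = a := by
      rw [hg, LinearMap.comp_apply, map_sub]
      rw [Submodule.projectionOnto_apply_left hcompl ⟨a, ha⟩]
      rw [Submodule.projectionOnto_apply_right hcompl ⟨b, hb⟩]
      simp
    have haD : a ∈ D := hmapD ⟨a - b, hd, hga⟩
    simp [Submodule.mem_bot, Submodule.mkQ_apply, Submodule.Quotient.mk_eq_zero, haD]
  have hcod : Submodule.map D.mkQ A ⊔ Submodule.map D.mkQ B = ⊤ := by
    rw [← Submodule.map_sup, hcompl.sup_eq_top, Submodule.map_top, Submodule.range_mkQ]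
  -- span equality
  have hspan : Submodule.span R {Submodule.Quotient.mk (p := D) m} = Submodule.map D.mkQ A := by
    have h1 : Submodule.span R {m} = A ⊔ (B ⊓ Submodule.span R {m}) := by
      have := sup_inf_assoc_of_le (B) (hA)
      rw [hcompl.sup_eq_top, top_inf_eq] at this
      exact this
    have h2 : Submodule.span R {Submodule.Quotient.mk (p := D) m}
        = Submodule.map D.mkQ (Submodule.span R {m}) := by
      rw [Submodule.map_span, Set.image_singleton, Submodule.mkQ_apply]
    have h3 : Submodule.map D.mkQ (B ⊓ Submodule.span R {m}) = ⊥ := by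
      rw [eq_bot_iff]
      rintro y ⟨z, hz, rfl⟩
      have : z ∈ D := hND (by rw [inf_comm] at hz; exact hz)
      simp [Submodule.mkQ_apply, Submodule.Quotient.mk_eq_zero, this]
    rw [h2, h1, Submodule.map_sup, h3, sup_bot_eq]
  refine ⟨Submodule.map D.mkQ B, ?_⟩
  rw [hspan]
  exact ⟨hdisj, codisjoint_iff.mpr hcod⟩
end

section
/- Let M be a projective right R-module. Then M is principally δ-semiperfect if and only if M is principally δ-lifting. -/
section Helpers

variable {R M M' : Type*} [Ring R] [AddCommGroup M] [Module R M]
  [AddCommGroup M'] [Module R M']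

lemma ess_mono {K K' : Submodule R M} (h : K ≤ K') (hK : IsEssentialSubmodule K) :
    IsEssentialSubmodule K' := by
  intro N hN hbot
  exact hK N hN (le_bot_iff.mp (hbot ▸ inf_le_inf_right N h))

lemma singular_of_surjective (f : M →ₗ[R] M') (hf : Function.Surjective f)
    (h : IsSingularModule R M) : IsSingularModule R M' := by
  intro x
  obtain ⟨m, rfl⟩ := hf x
  refine ess_mono (fun r hr => ?_) (h m)
  simp only [LinearMap.mem_ker, LinearMap.toSpanSingleton_apply] at hr ⊢
  rw [← map_smul, hr, map_zero]

lemma essAnn (W N₀ : Submodule R M) (n : M) (hn : n ∈ N₀)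
    (h : ∀ K : Submodule R M, K ≤ N₀ → K ≠ ⊥ → W ⊓ K ≠ ⊥) :
    IsEssentialSubmodule (W.comap (LinearMap.toSpanSingleton R M n)) := by
  intro I hI
  set φ := LinearMap.toSpanSingleton R M n with hφ
  by_cases hL : I.map φ = ⊥
  · have hIle : I ≤ W.comap φ := by
      intro r hr
      have : φ r ∈ I.map φ := Submodule.mem_map_of_mem hr
      rw [hL, Submodule.mem_bot] at this
      simp [Submodule.mem_comap, this]
    rwa [inf_eq_right.mpr hIle]
  · have hmap_le : I.map φ ≤ N₀ := by
      rintro _ ⟨r, hr, rfl⟩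
      exact Submodule.smul_mem _ r hn
    have := h (I.map φ) hmap_le hL
    rw [Submodule.ne_bot_iff] at this ⊢
    obtain ⟨y, ⟨hyW, r, hrI, rfl⟩, hy0⟩ := this
    exact ⟨r, ⟨Submodule.mem_inf.mpr ⟨hyW, hrI⟩, fun h0 => hy0 (by rw [h0, map_zero])⟩⟩

lemma quot_singular (W N₀ : Submodule R M) (hsup : W ⊔ N₀ = ⊤)
    (h : ∀ K : Submodule R M, K ≤ N₀ → K ≠ ⊥ → W ⊓ K ≠ ⊥) :
    IsSingularModule R (M ⧸ W) := by
  intro x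
  obtain ⟨v, rfl⟩ := Submodule.Quotient.mk_surjective W x
  obtain ⟨w, hw, n, hn, rfl⟩ := Submodule.mem_sup.mp (hsup ▸ Submodule.mem_top (x := v))
  have hker : LinearMap.ker (LinearMap.toSpanSingleton R (M ⧸ W) (Submodule.Quotient.mk (w + n)))
      = W.comap (LinearMap.toSpanSingleton R M n) := by
    ext r
    simp only [LinearMap.mem_ker, LinearMap.toSpanSingleton_apply, Submodule.mem_comap]
    rw [← Submodule.Quotient.mk_smul, Submodule.Quotient.mk_eq_zero]
    constructor
    · intro hr
      have : r • (w + n) - r • n = r • w := by rw [smul_add]; abel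
      have hrw : r • w ∈ W := Submodule.smul_mem _ _ hw
      have := W.sub_mem hr hrw
      rwa [show r • (w+n) - r • w = r • n by rw [smul_add]; abel] at this
    · intro hr
      rw [smul_add]
      exact W.add_mem (Submodule.smul_mem _ _ hw) hr
  rw [hker]
  exact essAnn W N₀ n hn h

end Helpers

section Delta

variable {R M M' : Type*} [Ring R] [AddCommGroup M] [Module R M]
  [AddCommGroup M'] [Module R M']

lemma delta_decomp {N : Submodule R M} (hN : IsDeltaSmall R N)
    (X : Submodule R M) (hX : X ⊔ N = ⊤) :
    ∃ Y : Submodule R M, Y ≤ N ∧ IsCompl X Y := by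
  set S : Set (Submodule R M) := {Y | Y ≤ N ∧ X ⊓ Y = ⊥} with hS
  have hzorn := zorn_le_nonempty₀ S (by
    rintro c hcS hchain Y₀ hY₀
    refine ⟨sSup c, ⟨?_, ?_⟩, fun z hz => le_sSup hz⟩
    · exact sSup_le fun z hz => (hcS hz).1
    · rw [eq_bot_iff]
      rintro a ⟨haX, haSup⟩
      rcases Submodule.mem_sSup_of_directed ⟨Y₀, hY₀⟩ (hchain.directedOn) |>.mp haSup with ⟨z, hzc, haz⟩
      have : a ∈ X ⊓ z := ⟨haX, haz⟩
      rw [(hcS hzc).2] at this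
      exact this) ⊥ ⟨bot_le, by simp⟩
  obtain ⟨Y, -, ⟨hYN, hXY⟩, hmax⟩ := hzorn
  have hess : ∀ K : Submodule R M, K ≤ N → K ≠ ⊥ → (X ⊔ Y) ⊓ K ≠ ⊥ := by
      intro K hKN hK0 hcon
      have hdisj : X ⊓ (Y ⊔ K) = ⊥ := by
        rw [eq_bot_iff]
        rintro a ⟨haX, haYK⟩
        obtain ⟨y, hy, k, hk, rfl⟩ := Submodule.mem_sup.mp haYK
        have hkXY : k ∈ (X ⊔ Y) ⊓ K := by
          refine ⟨?_, hk⟩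
          have : (y + k) - y ∈ X ⊔ Y :=
            Submodule.sub_mem _ (Submodule.mem_sup_left haX) (Submodule.mem_sup_right hy)
          simpa using this
        rw [hcon, Submodule.mem_bot] at hkXY
        subst hkXY
        have : y + 0 ∈ X ⊓ Y := ⟨haX, by simpa using hy⟩
        rw [hXY] at this
        simpa using this
      have hYK : Y ⊔ K ∈ S := ⟨sup_le hYN hKN, hdisj⟩
      have := hmax hYK le_sup_left
      have hKY : K ≤ Y := le_sup_right.trans this
      apply hK0
      rw [← hcon]
      exact (inf_eq_right.mpr (hKY.trans le_sup_right)).symm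
  have hsing : IsSingularModule R (M ⧸ (X ⊔ Y)) :=
    quot_singular (X ⊔ Y) N
      (by rw [← top_le_iff, ← hX]; exact sup_le (le_sup_left.trans le_sup_left) le_sup_right)
      hess
  have htop : X ⊔ Y = ⊤ :=
    hN _ (by
      rw [← top_le_iff, ← hX]
      exact sup_le (le_sup_of_le_right le_sup_left) le_sup_left) hsing
  exact ⟨Y, hYN, disjoint_iff.mpr hXY, codisjoint_iff.mpr htop⟩

lemma delta_restrict {N P1 Y : Submodule R M} (hN : IsDeltaSmall R N)
    (hc : IsCompl P1 Y) (hY : Y ≤ N) :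
    IsDeltaSmall R ((N ⊓ P1).comap P1.subtype) := by
  intro X' hsup' hsing'
  set X : Submodule R M := X'.map P1.subtype with hX
  have hXle : X ≤ P1 := by rw [hX]; rintro _ ⟨x, -, rfl⟩; exact x.2
  -- N ⊔ (X ⊔ Y) = ⊤
  have hsup : N ⊔ (X ⊔ Y) = ⊤ := by
    rw [← top_le_iff]
    rw [← codisjoint_iff.mp hc.codisjoint]
    refine sup_le ?_ (le_sup_of_le_right le_sup_right)
    intro p hp
    have : (⟨p, hp⟩ : P1) ∈ (⊤ : Submodule R P1) := Submodule.mem_top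
    rw [← hsup'] at this
    obtain ⟨a, ha, b, hb, hab⟩ := Submodule.mem_sup.mp this
    have hpe : p = (a : M) + (b : M) := by
      have := congrArg (Subtype.val : P1 → M) hab
      simpa using this.symm
    rw [hpe]
    exact Submodule.add_mem _ (Submodule.mem_sup_left (Submodule.mem_comap.mp ha).1)
      (Submodule.mem_sup_right (Submodule.mem_sup_left ⟨b, hb, rfl⟩))
  -- singular quotient
  have hsing : IsSingularModule R (M ⧸ (X ⊔ Y)) := by
    have hker : X' ≤ LinearMap.ker ((X ⊔ Y).mkQ ∘ₗ P1.subtype) := by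
      intro x hx
      simp only [LinearMap.mem_ker, LinearMap.comp_apply, Submodule.mkQ_apply,
        Submodule.Quotient.mk_eq_zero]
      exact Submodule.mem_sup_left (Submodule.mem_map_of_mem hx)
    have hsurj : Function.Surjective (X'.liftQ ((X ⊔ Y).mkQ ∘ₗ P1.subtype) hker) := by
      rintro q
      obtain ⟨v, rfl⟩ := Submodule.Quotient.mk_surjective _ q
      obtain ⟨a, ha, b, hb, rfl⟩ := Submodule.mem_sup.mp
        (codisjoint_iff.mp hc.codisjoint ▸ Submodule.mem_top (x := v))
      refine ⟨Submodule.Quotient.mk ⟨a, ha⟩, ?_⟩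
      rw [Submodule.liftQ_apply]
      simp only [LinearMap.comp_apply, Submodule.mkQ_apply, Submodule.coe_subtype]
      rw [Submodule.Quotient.eq]
      simpa using Submodule.neg_mem _ (Submodule.mem_sup_right hb)
    exact singular_of_surjective _ hsurj hsing'
  have htop : X ⊔ Y = ⊤ := hN _ hsup hsing
  -- conclude X' = ⊤
  rw [eq_top_iff]
  rintro ⟨p, hp⟩ -
  have hpXY : p ∈ X ⊔ Y := htop ▸ Submodule.mem_top
  obtain ⟨a, ha, b, hb, rfl⟩ := Submodule.mem_sup.mp hpXY
  have hbP1 : b ∈ P1 := by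
    have := Submodule.sub_mem P1 hp (hXle ha)
    simpa using this
  have hb0 : b = 0 := by
    have : b ∈ P1 ⊓ Y := ⟨hbP1, hb⟩
    rw [disjoint_iff.mp hc.disjoint] at this
    simpa using this
  subst hb0
  obtain ⟨x, hx, hxa⟩ := ha
  have : (⟨a + 0, hp⟩ : P1) = x := by
    ext; simpa using hxa.symm
  rw [this]
  exact hx

lemma delta_map_equiv (e : M ≃ₗ[R] M') {N : Submodule R M} (hN : IsDeltaSmall R N) :
    IsDeltaSmall R (N.map (e : M →ₗ[R] M')) := by
  intro X' hsup hsing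
  set X := X'.comap (e : M →ₗ[R] M') with hXdef
  have hmapX : X.map (e : M →ₗ[R] M') = X' :=
    Submodule.map_comap_eq_of_surjective e.surjective _
  have hsup2 : N ⊔ X = ⊤ := by
    apply Submodule.map_injective_of_injective (f := (e : M →ₗ[R] M')) e.injective
    rw [Submodule.map_sup, hmapX, Submodule.map_top, LinearEquiv.range, hsup]
  have hsing2 : IsSingularModule R (M ⧸ X) := by
    have equiv := Submodule.Quotient.equiv X X' e hmapX
    exact singular_of_surjective equiv.symm.toLinearMap equiv.symm.surjective hsing
  have htop := hN X hsup2 hsing2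
  rw [← hmapX, htop, Submodule.map_top, LinearEquiv.range]

end Delta

universe uR uX uP

/-- A *projective δ-cover* of a module `X`: a projective module `P` together with a
surjective homomorphism `f : P → X` whose kernel is δ-small in `P`. -/
structure ProjectiveDeltaCover (R : Type uR) (X : Type uX) [Ring R]
    [AddCommGroup X] [Module R X] : Type (max uR uX (uP + 1)) where
  P : Type uP
  [addCommGroup : AddCommGroup P]
  [module : Module R P]
  projective : Module.Projective R P
  f : P →ₗ[R] X
  surjective : Function.Surjective f
  ker_deltaSmall : IsDeltaSmall R (LinearMap.ker f)

/-- A module `M` is *principally δ-semiperfect* if for each `m ∈ M` the factor module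
`M/mR` has a projective δ-cover. -/
def IsPrinDeltaSemiperfect (R : Type uR) (M : Type uX) [Ring R] [AddCommGroup M]
    [Module R M] : Prop :=
  ∀ m : M, Nonempty (ProjectiveDeltaCover.{uR, uX, uP} R (M ⧸ Submodule.span R {m}))

theorem projective_isPrinDeltaSemiperfect_iff_isPrinDeltaLifting
    {R : Type uR} {M : Type uX} [Ring R] [AddCommGroup M] [Module R M]
    (hproj : Module.Projective R M) :
    IsPrinDeltaSemiperfect.{uR, uX, uX} R M ↔ IsPrinDeltaLifting R M := by
  haveI := hproj
  constructor
  · -- semiperfect → lifting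
    intro hsp m
    obtain ⟨C⟩ := hsp m
    letI := C.addCommGroup
    letI := C.module
    haveI := C.projective
    obtain ⟨h, hh⟩ := Module.projective_lifting_property C.f
      ((Submodule.span R {m}).mkQ) C.surjective
    have happ : ∀ x : M, C.f (h x) = Submodule.Quotient.mk x := fun x =>
      congrFun (congrArg DFunLike.coe hh) x
    have happ' : ∀ x : M, (Submodule.span R {m}).mkQ x = C.f (h x) := fun x => by
      rw [Submodule.mkQ_apply, happ]
    -- range h ⊔ ker C.f = ⊤
    have hsup : LinearMap.range h ⊔ LinearMap.ker C.f = ⊤ := by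
      rw [eq_top_iff]
      intro p _
      obtain ⟨v, hv⟩ := Submodule.Quotient.mk_surjective _ (C.f p)
      have : p - h v ∈ LinearMap.ker C.f := by
        rw [LinearMap.mem_ker, map_sub, happ, hv, sub_self]
      have hdecomp : p = h v + (p - h v) := by abel
      rw [hdecomp]
      exact Submodule.add_mem _ (Submodule.mem_sup_left (LinearMap.mem_range_self h v))
        (Submodule.mem_sup_right this)
    obtain ⟨Y, hYker, hcompl⟩ := delta_decomp C.ker_deltaSmall _ hsup
    have hrest : IsDeltaSmall R
        ((LinearMap.ker C.f ⊓ LinearMap.range h).comap (LinearMap.range h).subtype) :=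
      delta_restrict C.ker_deltaSmall hcompl hYker
    -- range h is projective
    haveI hproj1 : Module.Projective R ↥(LinearMap.range h) :=
      Module.Projective.of_split (LinearMap.range h).subtype
        (Submodule.projectionOnto _ _ hcompl)
        (by ext x; simp [Submodule.projectionOnto_apply_left hcompl])
    -- split the surjection M → range h
    obtain ⟨s, hs⟩ := Module.projective_lifting_property h.rangeRestrict LinearMap.id
      h.surjective_rangeRestrict
    have hs' : ∀ y : LinearMap.range h, h.rangeRestrict (s y) = y := fun y =>
      congrFun (congrArg DFunLike.coe hs) y
    have hcoe : ∀ x : M, (h.rangeRestrict x : C.P) = h x := fun x => rfl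
    have hsy : ∀ y : LinearMap.range h, h (s y) = (y : C.P) := by
      intro y
      rw [← hcoe, hs']
    set A := LinearMap.ker h with hA
    set B := LinearMap.range s with hB
    have hsinj : Function.Injective s := by
      intro a b hab
      have := congrArg h.rangeRestrict hab
      rwa [hs', hs'] at this
    have hAle : A ≤ Submodule.span R {m} := by
      intro x hx
      have hx0 : h x = 0 := hx
      have hmkQ : (Submodule.span R {m}).mkQ x = 0 := by rw [happ' x, hx0, map_zero]
      rw [← Submodule.ker_mkQ (Submodule.span R {m})]
      exact LinearMap.mem_ker.mpr hmkQ
    have hABcompl : IsCompl A B := by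
      constructor
      · rw [disjoint_iff, eq_bot_iff]
        rintro x ⟨hxA, hxB⟩
        obtain ⟨y, rfl⟩ := hxB
        have hxA' : h (s y) = 0 := hxA
        have h1 : h.rangeRestrict (s y) = 0 := by
          apply Subtype.ext
          rw [hcoe, hxA']; rfl
        rw [hs'] at h1
        rw [Submodule.mem_bot, h1, map_zero]
      · rw [codisjoint_iff, eq_top_iff]
        intro x _
        have hker : x - s (h.rangeRestrict x) ∈ A := by
          rw [hA, LinearMap.mem_ker, map_sub, hsy, hcoe, sub_self]
        have : x = (x - s (h.rangeRestrict x)) + s (h.rangeRestrict x) := by abel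
        rw [this]
        exact Submodule.add_mem _ (Submodule.mem_sup_left hker)
          (Submodule.mem_sup_right (LinearMap.mem_range_self s _))
    refine ⟨A, B, hAle, hABcompl, ?_⟩
    -- transport δ-smallness along the equivalence range h ≃ B
    set e : ↥(LinearMap.range h) ≃ₗ[R] ↥B := LinearEquiv.ofInjective s hsinj with he
    have hmain := delta_map_equiv e hrest
    have hkey : ∀ y : ↥(LinearMap.range h),
        ((y : C.P) ∈ LinearMap.ker C.f ↔ s y ∈ Submodule.span R {m}) := by
      intro y
      have h1 : (Submodule.span R {m}).mkQ (s y) = C.f (y : C.P) := by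
        rw [happ' (s y), hsy]
      constructor
      · intro hy
        have h2 : (Submodule.span R {m}).mkQ (s y) = 0 := by
          rw [h1]; exact LinearMap.mem_ker.mp hy
        exact (Submodule.Quotient.mk_eq_zero _).mp h2
      · intro hy
        have h2 : (Submodule.span R {m}).mkQ (s y) = 0 := by
          rw [Submodule.mkQ_apply, Submodule.Quotient.mk_eq_zero]; exact hy
        refine LinearMap.mem_ker.mpr ?_
        rw [← h1]; exact h2
    have heq : (Submodule.span R {m} ⊓ B).comap B.subtype =
        ((LinearMap.ker C.f ⊓ LinearMap.range h).comap
          (LinearMap.range h).subtype).map (e : ↥(LinearMap.range h) →ₗ[R] ↥B) := by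
      ext x
      simp only [Submodule.mem_comap, Submodule.mem_inf, Submodule.coe_subtype, Submodule.mem_map]
      constructor
      · rintro ⟨hx1, -⟩
        obtain ⟨y, hy⟩ : ∃ y : LinearMap.range h, s y = (x : M) := x.2
        refine ⟨y, ⟨?_, y.2⟩, ?_⟩
        · rw [hkey, hy]; exact hx1
        · apply Subtype.ext
          rw [he]
          show s y = (x : M)
          exact hy
      · rintro ⟨y, ⟨hy1, -⟩, rfl⟩
        have hcoeB : ((e : ↥(LinearMap.range h) →ₗ[R] ↥B) y : M) = s y := rfl
        constructor
        · rw [hcoeB, ← hkey]; exact hy1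
        · rw [hcoeB]; exact LinearMap.mem_range_self s y
    rw [heq]
    exact hmain
  · -- lifting → semiperfect
    intro hl m
    obtain ⟨A, B, hA, hcompl, hsmall⟩ := hl m
    have hBproj : Module.Projective R ↥B :=
      Module.Projective.of_split B.subtype
        (Submodule.projectionOnto _ _ hcompl.symm)
        (by ext x; simp [Submodule.projectionOnto_apply_left hcompl.symm])
    refine ⟨⟨↥B, hBproj, (Submodule.span R {m}).mkQ ∘ₗ B.subtype, ?_, ?_⟩⟩
    · -- surjective
      intro q
      obtain ⟨v, rfl⟩ := Submodule.Quotient.mk_surjective _ q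
      have hvsup : v ∈ Submodule.span R {m} ⊔ B := by
        have : (⊤ : Submodule R M) ≤ Submodule.span R {m} ⊔ B := by
          rw [← codisjoint_iff.mp hcompl.codisjoint]
          exact sup_le (hA.trans le_sup_left) le_sup_right
        exact this Submodule.mem_top
      obtain ⟨a, ha, b, hb, rfl⟩ := Submodule.mem_sup.mp hvsup
      refine ⟨⟨b, hb⟩, ?_⟩
      show Submodule.Quotient.mk b = Submodule.Quotient.mk (a + b)
      rw [Submodule.Quotient.eq]
      simpa using Submodule.neg_mem _ ha
    · -- kernel δ-small
      have hker : LinearMap.ker ((Submodule.span R {m}).mkQ ∘ₗ B.subtype) =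
          (Submodule.span R {m} ⊓ B).comap B.subtype := by
        ext x
        simp only [LinearMap.mem_ker, LinearMap.comp_apply, Submodule.mkQ_apply,
          Submodule.Quotient.mk_eq_zero, Submodule.mem_comap, Submodule.mem_inf,
          Submodule.coe_subtype]
        exact ⟨fun hx => ⟨hx, x.2⟩, fun hx => hx.1⟩
      rw [hker]
      exact hsmall
end

section
/- If M is a principally δ-semiperfect right R-module, then M is principally δ-supplemented; that is, for every m ∈ M there exists a submodule L of M with M = mR + L and mR ∩ L δ-small in L. -/
universe uR uX uP

theorem singular_of_injective_s18 {R A B : Type*} [Ring R] [AddCommGroup A] [Module R A]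
    [AddCommGroup B] [Module R B] (φ : A →ₗ[R] B) (hφ : Function.Injective φ)
    (hB : IsSingularModule R B) : IsSingularModule R A := by
  intro x
  have hk : LinearMap.ker (LinearMap.toSpanSingleton R A x)
      = LinearMap.ker (LinearMap.toSpanSingleton R B (φ x)) := by
    ext r
    simp only [LinearMap.mem_ker, LinearMap.toSpanSingleton_apply]
    constructor
    · intro h; rw [← map_smul φ, h, map_zero]
    · intro h; apply hφ; rw [map_smul, h, map_zero]
  rw [hk]; exact hB (φ x)

theorem deltaSmall_map_s18 {R P L : Type*} [Ring R] [AddCommGroup P] [Module R P]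
    [AddCommGroup L] [Module R L] (h : P →ₗ[R] L) (hs : Function.Surjective h)
    {K : Submodule R P} (hK : IsDeltaSmall R K) :
    IsDeltaSmall R (Submodule.map h K) := by
  intro X hsup hsing
  set Y := Submodule.comap h X with hY
  have hker : LinearMap.ker (X.mkQ.comp h) = Y := by
    ext p; simp [hY, Submodule.mem_comap]
  have hPsing : IsSingularModule R (P ⧸ Y) := by
    refine singular_of_injective_s18 (Submodule.liftQ Y (X.mkQ.comp h) hker.ge) ?_ hsing
    rw [← LinearMap.ker_eq_bot, Submodule.ker_liftQ_eq_bot]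
    exact hker.le
  have hPY : K ⊔ Y = ⊤ := by
    rw [eq_top_iff]; intro p _
    have hp : h p ∈ Submodule.map h K ⊔ X := hsup ▸ Submodule.mem_top
    obtain ⟨a, ⟨k, hk, rfl⟩, x, hx, hax⟩ := Submodule.mem_sup.mp hp
    refine Submodule.mem_sup.mpr ⟨k, hk, p - k, ?_, by abel⟩
    show h (p - k) ∈ X
    rw [map_sub, ← hax]; simpa using hx
  have hYtop := hK Y hPY hPsing
  rw [eq_top_iff]; intro l _
  obtain ⟨p, rfl⟩ := hs l
  have hp : p ∈ Y := by rw [hYtop]; trivial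
  exact hp

theorem isPrinDeltaSupplemented_of_isPrinDeltaSemiperfect
    {R : Type uR} {M : Type uX} [Ring R] [AddCommGroup M] [Module R M]
    (hM : IsPrinDeltaSemiperfect.{uR, uX, uP} R M) :
    ∀ m : M, ∃ L : Submodule R M, Submodule.span R {m} ⊔ L = ⊤ ∧
      IsDeltaSmall R ((Submodule.span R {m} ⊓ L).comap L.subtype) := by
  intro m
  obtain ⟨C⟩ := hM m
  letI := C.addCommGroup
  letI := C.module
  haveI := C.projective
  obtain ⟨g, hg⟩ := Module.projective_lifting_property
    (Submodule.span R {m}).mkQ C.f (Submodule.mkQ_surjective _)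
  have hgf : ∀ p : C.P, (Submodule.span R {m}).mkQ (g p) = C.f p := fun p =>
    congrArg (fun φ => φ p) hg
  refine ⟨LinearMap.range g, ?_, ?_⟩
  · rw [eq_top_iff]; intro x _
    obtain ⟨p, hp⟩ := C.surjective ((Submodule.span R {m}).mkQ x)
    refine Submodule.mem_sup.mpr ⟨x - g p, ?_, g p, ⟨p, rfl⟩, by abel⟩
    have : x - g p ∈ LinearMap.ker (Submodule.span R {m}).mkQ := by
      rw [LinearMap.mem_ker, map_sub, hgf, hp, sub_self]
    rwa [Submodule.ker_mkQ] at this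
  · have hN : (Submodule.span R {m} ⊓ LinearMap.range g).comap (LinearMap.range g).subtype
        = Submodule.map g.rangeRestrict (LinearMap.ker C.f) := by
      ext x
      obtain ⟨x, hxL⟩ := x
      simp only [Submodule.mem_comap, Submodule.coe_subtype, Submodule.mem_inf,
        Submodule.mem_map, LinearMap.mem_ker]
      constructor
      · rintro ⟨hxs, -⟩
        obtain ⟨p, rfl⟩ := hxL
        refine ⟨p, ?_, Subtype.ext rfl⟩
        rw [← hgf]
        simpa [Submodule.Quotient.mk_eq_zero] using hxs
      · rintro ⟨p, hp, hpx⟩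
        have hgx : g p = x := congrArg Subtype.val hpx
        refine ⟨?_, hxL⟩
        have : (Submodule.span R {m}).mkQ x = 0 := by rw [← hgx, hgf, hp]
        simpa [Submodule.Quotient.mk_eq_zero] using this
    rw [hN]
    exact deltaSmall_map_s18 g.rangeRestrict g.surjective_rangeRestrict C.ker_deltaSmall
end
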